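/- For every k ∈ ℕ, the k-th moment of the semicircle distribution with density (1/(2π))√(4−x²) on (−2,2) equals (1/(k/2+1))·C(k, k/2) if k is even, and 0 if k is odd. -/

import Mathlib

open MeasureTheory

noncomputable def semicircle : Measure ℝ :=
  volume.withDensity fun x =>
    ENNReal.ofReal
      ((Set.Ioo (-2 : ℝ) 2).indicator
        (fun x => 1 / (2 * Real.pi) * Real.sqrt (4 - x ^ 2)) x)

open Real
open scoped NNReal ENNReal

noncomputable def scJ (n : ℕ) : ℝ := ∫ θ in (-(π/2))..(π/2), Real.sin θ ^ n

lemma moment_step1 (k : ℕ) :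
    ∫ x, x ^ k ∂semicircle
      = ∫ x in (-2 : ℝ)..2, (1 / (2 * π) * Real.sqrt (4 - x ^ 2)) * x ^ k := by
  set ind : ℝ → ℝ := (Set.Ioo (-2 : ℝ) 2).indicator
      (fun x => 1 / (2 * π) * Real.sqrt (4 - x ^ 2)) with hind
  have hindm : Measurable ind := by
    apply Measurable.indicator _ measurableSet_Ioo
    fun_prop
  have hd : Measurable fun x : ℝ => Real.toNNReal (ind x) := hindm.real_toNNReal
  have hnn : ∀ x, 0 ≤ ind x := by
    intro x
    apply Set.indicator_nonneg
    intro y _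
    positivity
  have h0 : ∫ x, x ^ k ∂semicircle = ∫ x, Real.toNNReal (ind x) • x ^ k := by
    rw [show semicircle = volume.withDensity
        (fun x => ((Real.toNNReal (ind x) : ℝ≥0) : ℝ≥0∞)) from rfl]
    exact integral_withDensity_eq_integral_smul hd _
  rw [h0]
  have h1 : ∀ x : ℝ, Real.toNNReal (ind x) • x ^ k
      = (Set.Ioo (-2 : ℝ) 2).indicator
          (fun x => (1 / (2 * π) * Real.sqrt (4 - x ^ 2)) * x ^ k) x := by
    intro x
    rw [NNReal.smul_def, Real.coe_toNNReal _ (hnn x), hind]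
    exact (Set.indicator_mul_left _ _ _).symm
  simp_rw [h1]
  rw [integral_indicator measurableSet_Ioo,
    ← integral_Ioc_eq_integral_Ioo,
    ← intervalIntegral.integral_of_le (by norm_num : (-2:ℝ) ≤ 2)]

lemma moment_step2 (k : ℕ) :
    (∫ x in (-2 : ℝ)..2, (1 / (2 * π) * Real.sqrt (4 - x ^ 2)) * x ^ k)
      = 2 ^ (k + 1) / (π * (k + 2)) * scJ k := by
  have hderiv : ∀ θ ∈ Set.uIcc (-(π/2)) (π/2),
      HasDerivAt (fun θ => 2 * Real.sin θ) (2 * Real.cos θ) θ := by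
    intro θ _
    exact (Real.hasDerivAt_sin θ).const_mul 2
  have hsub := intervalIntegral.integral_comp_smul_deriv (a := -(π/2)) (b := π/2)
      (f := fun θ => 2 * Real.sin θ) (f' := fun θ => 2 * Real.cos θ)
      (g := fun x => (1 / (2 * π) * Real.sqrt (4 - x ^ 2)) * x ^ k)
      hderiv (by fun_prop) (by fun_prop)
  beta_reduce at hsub
  rw [show (2 : ℝ) * Real.sin (-(π/2)) = -2 by simp,
    show (2 : ℝ) * Real.sin (π/2) = 2 by simp] at hsub
  rw [← hsub]
  have hcongr : Set.EqOn
      (fun θ => (2 * Real.cos θ) •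
        ((fun x => (1 / (2 * π) * Real.sqrt (4 - x ^ 2)) * x ^ k) ∘ fun θ => 2 * Real.sin θ) θ)
      (fun θ => (2 ^ (k + 1) / π) * (Real.sin θ ^ k - Real.sin θ ^ (k + 2)))
      (Set.uIcc (-(π/2)) (π/2)) := by
    intro θ hθ
    have hθ' : θ ∈ Set.Icc (-(π/2)) (π/2) := by
      rwa [Set.uIcc_of_le (by linarith [pi_pos])] at hθ
    have hc : 0 ≤ Real.cos θ := Real.cos_nonneg_of_mem_Icc hθ'
    simp only [Function.comp, smul_eq_mul]
    rw [show 4 - (2 * Real.sin θ) ^ 2 = (2 * Real.cos θ) ^ 2 from by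
      nlinarith [Real.sin_sq_add_cos_sq θ]]
    rw [Real.sqrt_sq (by positivity)]
    linear_combination (2 ^ (k + 1) / π * Real.sin θ ^ k) * (Real.sin_sq_add_cos_sq θ)
  rw [intervalIntegral.integral_congr hcongr]
  rw [intervalIntegral.integral_const_mul]
  rw [intervalIntegral.integral_sub
    ((by fun_prop : Continuous fun θ => Real.sin θ ^ k).intervalIntegrable _ _)
    ((by fun_prop : Continuous fun θ => Real.sin θ ^ (k + 2)).intervalIntegrable _ _)]
  have hstep : (∫ θ in (-(π/2))..(π/2), Real.sin θ ^ (k + 2))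
      = (k + 1) / (k + 2) * scJ k := by
    have h := integral_sin_pow (a := -(π/2)) (b := π/2) k
    simpa [scJ, Real.cos_pi_div_two] using h
  rw [hstep]
  rw [show (∫ θ in (-(π/2))..(π/2), Real.sin θ ^ k) = scJ k from rfl]
  have hπ : (π : ℝ) ≠ 0 := Real.pi_ne_zero
  have hk2 : ((k : ℝ) + 2) ≠ 0 := by positivity
  field_simp
  ring

lemma scJ_odd (m : ℕ) : scJ (2 * m + 1) = 0 := by
  induction m with
  | zero => simp [scJ]
  | succ m ih =>
      have h : 2 * (m + 1) + 1 = (2 * m + 1) + 2 := by ring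
      have hstep := integral_sin_pow (a := -(π/2)) (b := π/2) (2 * m + 1)
      have : scJ ((2 * m + 1) + 2) = ((2*m+1 : ℕ) + 1) / ((2*m+1 : ℕ) + 2) * scJ (2*m+1) := by
        simpa [scJ, Real.cos_pi_div_two] using hstep
      rw [h, this, ih, mul_zero]

lemma scJ_step' (n : ℕ) : ((n : ℝ) + 2) * scJ (n + 2) = ((n : ℝ) + 1) * scJ n := by
  have hstep := integral_sin_pow (a := -(π/2)) (b := π/2) n
  have h : scJ (n + 2) = ((n : ℝ) + 1) / ((n : ℝ) + 2) * scJ n := by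
    simpa [scJ, Real.cos_pi_div_two] using hstep
  rw [h]
  field_simp

lemma scJ_even (m : ℕ) : scJ (2 * m) * 2 ^ (2 * m) = π * ((2 * m).choose m : ℝ) := by
  induction m with
  | zero => simp [scJ]
  | succ m ih =>
      have hCB : ((m : ℝ) + 1) * ((2 * m + 2).choose (m + 1) : ℝ)
          = 2 * (2 * (m : ℝ) + 1) * ((2 * m).choose m : ℝ) := by
        have h := Nat.succ_mul_centralBinom_succ m
        simp only [Nat.centralBinom, show 2 * (m + 1) = 2 * m + 2 from by ring] at h
        exact_mod_cast h
      have hs := scJ_step' (2 * m)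
      have hm1 : ((m : ℝ) + 1) ≠ 0 := by positivity
      apply mul_left_cancel₀ hm1
      rw [show 2 * (m + 1) = 2 * m + 2 from by ring]
      push_cast at hs hCB ⊢
      linear_combination (2 * (2:ℝ) ^ (2 * m)) * hs + (2 * (2 * (m : ℝ) + 1)) * ih
        + (-π) * hCB

lemma moment_eq (k : ℕ) :
    ∫ x, x ^ k ∂semicircle = 2 ^ (k + 1) / (π * ((k : ℝ) + 2)) * scJ k := by
  rw [moment_step1, moment_step2]

theorem semicircle_moment (k : ℕ) :
    ∫ x, x ^ k ∂semicircle =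
      if Even k then (1 / ((k / 2 : ℕ) + 1 : ℝ)) * (k.choose (k / 2) : ℝ) else 0 := by
  rcases Nat.even_or_odd k with he | ho
  · obtain ⟨m, hm⟩ := he
    have hk : k = 2 * m := by omega
    subst hk
    rw [if_pos (even_two_mul m), moment_eq, show (2 * m) / 2 = m from by omega]
    have hJ := scJ_even m
    have hπ : (π : ℝ) ≠ 0 := Real.pi_ne_zero
    have hm1 : ((m : ℝ) + 1) ≠ 0 := by positivity
    have h2 : ((2:ℝ) ^ (2 * m)) ≠ 0 := by positivity
    push_cast
    field_simp
    linear_combination 2 * hJ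
  · obtain ⟨m, hm⟩ := ho
    subst hm
    rw [if_neg (by simp [Nat.not_even_iff_odd.mpr ⟨m, rfl⟩]), moment_eq, scJ_odd, mul_zero]
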